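/- arXiv:1109.4103 — 2 statements merged into one kernel-verified Lean document; each statement's English description precedes it below -/
import Mathlib

section
/- If a graph G is built from a single vertex by a sequence of k 2-edge blowouts, then choosing one of the two new edges from each blowout yields a spanning tree of G, and the complementary set of chosen edges also forms a spanning tree; hence G is the edge-disjoint union of two spanning trees. -/
/-- A multigraph: each edge `e` has two (possibly equal) endpoints
`fst e` and `snd e`.  Loops and parallel edges are allowed. -/
structure Multigraph (V : Type*) (E : Type*) where
  fst : E → V
  snd : E → V

namespace Multigraph

variable {V E : Type*}

/-- `u` and `v` are joined by some edge belonging to the edge set `S`. -/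
def Adj (G : Multigraph V E) (S : Set E) (u v : V) : Prop :=
  ∃ e ∈ S, (G.fst e = u ∧ G.snd e = v) ∨ (G.fst e = v ∧ G.snd e = u)

/-- The spanning subgraph with edge set `S` is connected
(every two vertices are joined by a walk using edges of `S`). -/
def Conn (G : Multigraph V E) (S : Set E) : Prop :=
  ∀ u v : V, Relation.ReflTransGen (G.Adj S) u v

/-- `S` is (the edge set of) a spanning tree of `G`: it is connected and spanning,
and it is minimal with this property, i.e. every edge of `S` is a bridge of the
subgraph `S` (equivalently, `S` is a connected acyclic spanning subgraph). -/
def IsSpanningTree (G : Multigraph V E) (S : Set E) : Prop :=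
  G.Conn S ∧ ∀ e ∈ S, ¬ G.Conn (S \ {e})

end Multigraph

namespace Multigraph

open Classical in
/-- The 2-edge blowout of `H` at the vertex `v`: the vertex `v` is split into two
vertices `Sum.inl v` (the vertex `v'`) and `Sum.inr ()` (the new vertex `v''`); each
endpoint of an old edge formerly at `v` is reassigned to `v''` exactly when the
corresponding partition function (`pf` for first endpoints, `ps` for second endpoints)
says so; and two new parallel edges `Sum.inr 0`, `Sum.inr 1` are added between
`v'` and `v''`. -/
noncomputable def blowout2 {V E : Type*} (H : Multigraph V E) (v : V)
    (pf ps : E → Bool) : Multigraph (V ⊕ Unit) (E ⊕ Fin 2) where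
  fst := Sum.elim
    (fun e => if H.fst e = v ∧ pf e = true then Sum.inr () else Sum.inl (H.fst e))
    (fun _ => Sum.inl v)
  snd := Sum.elim
    (fun e => if H.snd e = v ∧ ps e = true then Sum.inr () else Sum.inl (H.snd e))
    (fun _ => Sum.inr ())

end Multigraph

namespace Multigraph

/-- The one-vertex graph with no edges. -/
def point : Multigraph PUnit PEmpty where
  fst := fun e => e.elim
  snd := fun e => e.elim

/-- `Built2 G` means that `G` can be built from a single vertex by a finite
sequence of 2-edge blowouts. -/
inductive Built2 : ∀ {V E : Type}, Multigraph V E → Prop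
  | base : Built2 point
  | step {V E : Type} (H : Multigraph V E) (v : V) (pf ps : E → Bool) :
      Built2 H → Built2 (H.blowout2 v pf ps)

end Multigraph

namespace Multigraph

variable {V E : Type*}

lemma adj_symm (G : Multigraph V E) (S : Set E) : Symmetric (G.Adj S) := by
  rintro x y ⟨e, he, h⟩
  exact ⟨e, he, h.symm⟩

lemma reach_symm (G : Multigraph V E) (S : Set E) {x y : V}
    (h : Relation.ReflTransGen (G.Adj S) x y) :
    Relation.ReflTransGen (G.Adj S) y x :=
  @Std.Symm.symm _ _ (@Relation.ReflTransGen.stdSymm _ _ ⟨fun _ _ hab => adj_symm G S hab⟩) _ _ h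

lemma conn_card : ∀ (n : ℕ) (V E : Type) [Finite V] [Finite E] (G : Multigraph V E) (S : Set E),
    Nat.card V = n → G.Conn S → Nat.card V ≤ Nat.card S + 1 := by
  intro n
  induction n using Nat.strong_induction_on with
  | _ n ih =>
    intro V E _ _ G S hn h
    by_cases hle : Nat.card V ≤ 1
    · omega
    · have hnt : Nontrivial V := Finite.one_lt_card_iff_nontrivial.mp (by omega)
      obtain ⟨u, w, huw⟩ := hnt
      have hne : ∃ e ∈ S, G.fst e ≠ G.snd e := by
        by_contra hno
        push_neg at hno
        have hadj : ∀ x y : V, G.Adj S x y → x = y := by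
          rintro x y ⟨e, he, (⟨h1, h2⟩ | ⟨h1, h2⟩)⟩
          · rw [← h1, ← h2]; exact hno e he
          · rw [← h1, ← h2]; exact (hno e he).symm
        have heq : ∀ x y : V, Relation.ReflTransGen (G.Adj S) x y → x = y := by
          intro x y hxy
          induction hxy with
          | refl => rfl
          | tail _ h2 ih2 => exact ih2.trans (hadj _ _ h2)
        exact huw (heq u w (h u w))
      obtain ⟨e0, he0, hab⟩ := hne
      classical
      set b := G.snd e0 with hb
      let r : V → {x : V // x ≠ b} := fun x => if hx : x = b then ⟨G.fst e0, hab⟩ else ⟨x, hx⟩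
      let G' : Multigraph {x : V // x ≠ b} E := ⟨r ∘ G.fst, r ∘ G.snd⟩
      have hstep : ∀ x y, G.Adj S x y →
          Relation.ReflTransGen (G'.Adj (S \ {e0})) (r x) (r y) := by
        rintro x y ⟨e, he, hor⟩
        by_cases heq : e = e0
        · have h1 : r (G.snd e0) = ⟨G.fst e0, hab⟩ := dif_pos rfl
          have h2 : r (G.fst e0) = ⟨G.fst e0, hab⟩ := dif_neg hab
          have hra : r (G.fst e0) = r (G.snd e0) := h2.trans h1.symm
          have hxy : r x = r y := by
            rcases hor with ⟨hh1, hh2⟩ | ⟨hh1, hh2⟩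
            · rw [← hh1, ← hh2, heq]; exact hra
            · rw [← hh1, ← hh2, heq]; exact hra.symm
          rw [hxy]
        · refine Relation.ReflTransGen.single ⟨e, ⟨he, heq⟩, ?_⟩
          rcases hor with ⟨h1, h2⟩ | ⟨h1, h2⟩
          · exact Or.inl ⟨congrArg r h1, congrArg r h2⟩
          · exact Or.inr ⟨congrArg r h1, congrArg r h2⟩
      have hconn' : G'.Conn (S \ {e0}) := by
        intro u' v'
        have hlift : ∀ x y : V, Relation.ReflTransGen (G.Adj S) x y →
            Relation.ReflTransGen (G'.Adj (S \ {e0})) (r x) (r y) := by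
          intro x y hxy
          induction hxy with
          | refl => exact Relation.ReflTransGen.refl
          | tail _ h2 ih2 => exact ih2.trans (hstep _ _ h2)
        have hr : ∀ z : {x : V // x ≠ b}, r z.val = z := by
          intro z; simp only [r]; rw [dif_neg z.prop]
        have := hlift u'.val v'.val (h u'.val v'.val)
        rwa [hr, hr] at this
      have hVcard : Nat.card V = Nat.card {x : V // x ≠ b} + 1 := by
        have hc := Nat.card_congr (Equiv.sumCompl (fun x : V => x ≠ b))
        rw [Nat.card_sum] at hc
        have hone : Nat.card {x : V // ¬ x ≠ b} = 1 := by
          rw [Nat.card_eq_one_iff_unique]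
          exact ⟨⟨fun x y => Subtype.ext ((not_not.mp x.prop).trans (not_not.mp y.prop).symm)⟩,
            ⟨⟨b, not_not_intro rfl⟩⟩⟩
        rw [hone] at hc
        omega
      have h' := ih (Nat.card {x : V // x ≠ b}) (by omega) _ E G' (S \ {e0}) rfl hconn'
      have hS : (S \ {e0}).ncard + 1 = S.ncard := Set.ncard_diff_singleton_add_one he0
      rw [Nat.card_coe_set_eq] at h' ⊢
      omega

lemma isSpanningTree_of {V E : Type} [Finite V] [Finite E] (G : Multigraph V E) (S : Set E)
    (hc : G.Conn S) (hcard : Nat.card S + 1 = Nat.card V) : G.IsSpanningTree S := by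
  refine ⟨hc, fun e he hconn => ?_⟩
  have h1 := conn_card (Nat.card V) V E G (S \ {e}) rfl hconn
  have h2 : (S \ {e}).ncard + 1 = S.ncard := Set.ncard_diff_singleton_add_one he
  rw [Nat.card_coe_set_eq] at h1 hcard
  omega

lemma blowout_conn {V E : Type} (H : Multigraph V E) (v : V) (pf ps : E → Bool)
    (T : Set E) (hT : H.Conn T) (i : Fin 2) :
    (H.blowout2 v pf ps).Conn (Sum.inl '' T ∪ {Sum.inr i}) := by
  set G := H.blowout2 v pf ps with hG
  set S : Set (E ⊕ Fin 2) := Sum.inl '' T ∪ {Sum.inr i} with hS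
  have hbridge : G.Adj S (Sum.inl v) (Sum.inr ()) :=
    ⟨Sum.inr i, Or.inr rfl, Or.inl ⟨rfl, rfl⟩⟩
  have key : ∀ x y : V, H.Adj T x y →
      Relation.ReflTransGen (G.Adj S) (Sum.inl x) (Sum.inl y) := by
    rintro x y ⟨e, he, hxy⟩
    have hmem : Sum.inl e ∈ S := Or.inl ⟨e, he, rfl⟩
    have hadj : G.Adj S (G.fst (Sum.inl e)) (G.snd (Sum.inl e)) :=
      ⟨Sum.inl e, hmem, Or.inl ⟨rfl, rfl⟩⟩
    have h1 : Relation.ReflTransGen (G.Adj S) (Sum.inl (H.fst e)) (G.fst (Sum.inl e)) := by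
      by_cases hcond : H.fst e = v ∧ pf e = true
      · have hfe : G.fst (Sum.inl e) = Sum.inr () := by
          simp [hG, blowout2, hcond]
        rw [hfe, hcond.1]; exact Relation.ReflTransGen.single hbridge
      · have hfe : G.fst (Sum.inl e) = Sum.inl (H.fst e) := by
          simp only [hG, blowout2, Sum.elim_inl]
          rw [if_neg hcond]
        rw [hfe]
    have h2 : Relation.ReflTransGen (G.Adj S) (Sum.inl (H.snd e)) (G.snd (Sum.inl e)) := by
      by_cases hcond : H.snd e = v ∧ ps e = true
      · have hfe : G.snd (Sum.inl e) = Sum.inr () := by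
          simp [hG, blowout2, hcond]
        rw [hfe, hcond.1]; exact Relation.ReflTransGen.single hbridge
      · have hfe : G.snd (Sum.inl e) = Sum.inl (H.snd e) := by
          simp only [hG, blowout2, Sum.elim_inl]
          rw [if_neg hcond]
        rw [hfe]
    have hmain : Relation.ReflTransGen (G.Adj S) (Sum.inl (H.fst e)) (Sum.inl (H.snd e)) :=
      (h1.trans (Relation.ReflTransGen.single hadj)).trans (reach_symm G S h2)
    rcases hxy with ⟨ha, hb⟩ | ⟨ha, hb⟩
    · rw [← ha, ← hb]; exact hmain
    · rw [← ha, ← hb]; exact reach_symm G S hmain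
  have lift : ∀ x y : V, Relation.ReflTransGen (H.Adj T) x y →
      Relation.ReflTransGen (G.Adj S) (Sum.inl x) (Sum.inl y) := by
    intro x y hxy
    induction hxy with
    | refl => exact Relation.ReflTransGen.refl
    | tail _ h2 ih2 => exact ih2.trans (key _ _ h2)
  have toInl : ∀ a : V ⊕ Unit, ∃ x : V, Relation.ReflTransGen (G.Adj S) a (Sum.inl x) := by
    rintro (x | u)
    · exact ⟨x, Relation.ReflTransGen.refl⟩
    · exact ⟨v, reach_symm G S (Relation.ReflTransGen.single hbridge)⟩
  intro a b
  obtain ⟨x, hx⟩ := toInl a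
  obtain ⟨y, hy⟩ := toInl b
  exact (hx.trans (lift x y (hT x y))).trans (reach_symm G S hy)


end Multigraph

namespace Multigraph

lemma card_blowout_edges {E : Type} [Finite E] (T : Set E) (i : Fin 2) :
    Nat.card ↥((Sum.inl '' T ∪ {Sum.inr i}) : Set (E ⊕ Fin 2)) = Nat.card ↥T + 1 := by
  rw [Nat.card_coe_set_eq, Nat.card_coe_set_eq]
  rw [Set.ncard_union_eq (by simp) (Set.toFinite _) (Set.toFinite _)]
  rw [Set.ncard_image_of_injective _ Sum.inl_injective, Set.ncard_singleton]

theorem built2_aux {V E : Type} (G : Multigraph V E) (hG : Multigraph.Built2 G) :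
    ∃ _ : Finite V, ∃ _ : Finite E, ∃ T1 T2 : Set E,
      G.Conn T1 ∧ G.Conn T2 ∧ Disjoint T1 T2 ∧ T1 ∪ T2 = Set.univ ∧
      Nat.card ↥T1 + 1 = Nat.card V ∧ Nat.card ↥T2 + 1 = Nat.card V := by
  induction hG with
  | base =>
    refine ⟨inferInstance, inferInstance, ∅, ∅, ?_, ?_, ?_, ?_, ?_, ?_⟩
    · intro u w; rw [Subsingleton.elim u w]
    · intro u w; rw [Subsingleton.elim u w]
    · simp
    · ext e; exact e.elim
    · simp
    · simp
  | step H v pf ps _ ih =>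
    obtain ⟨hV, hE, T1, T2, hc1, hc2, hdisj, huniv, hcard1, hcard2⟩ := ih
    refine ⟨inferInstance, inferInstance,
      Sum.inl '' T1 ∪ {Sum.inr 0}, Sum.inl '' T2 ∪ {Sum.inr 1},
      blowout_conn H v pf ps T1 hc1 0, blowout_conn H v pf ps T2 hc2 1, ?_, ?_, ?_, ?_⟩
    · rw [Set.disjoint_left]
      rintro x (⟨e, he1, rfl⟩ | hx) hx2
      · rcases hx2 with ⟨e', he2, heq⟩ | hx2
        · rw [Sum.inl_injective heq] at he2
          exact (Set.disjoint_left.mp hdisj he1) he2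
        · simp at hx2
      · simp only [Set.mem_singleton_iff] at hx
        subst hx
        rcases hx2 with ⟨e', _, heq⟩ | hx2
        · simp at heq
        · simp at hx2
    · ext x
      simp only [Set.mem_union, Set.mem_image, Set.mem_singleton_iff, Set.mem_univ, iff_true]
      rcases x with e | j
      · have : e ∈ T1 ∪ T2 := huniv ▸ Set.mem_univ e
        rcases this with h | h
        · exact Or.inl (Or.inl ⟨e, h, rfl⟩)
        · exact Or.inr (Or.inl ⟨e, h, rfl⟩)
      · rcases j with ⟨jv, hj⟩
        interval_cases jv
        · exact Or.inl (Or.inr rfl)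
        · exact Or.inr (Or.inr rfl)
    · rw [card_blowout_edges, Nat.card_sum, (Nat.card_unique : Nat.card Unit = 1)]
      omega
    · rw [card_blowout_edges, Nat.card_sum, (Nat.card_unique : Nat.card Unit = 1)]
      omega

end Multigraph

/-- If a graph `G` is built from a single vertex by a sequence of 2-edge blowouts,
then `G` is the edge-disjoint union of two spanning trees. -/
theorem built2_two_disjoint_spanning_trees {V E : Type} (G : Multigraph V E)
    (hG : Multigraph.Built2 G) :
    ∃ T1 T2 : Set E, G.IsSpanningTree T1 ∧ G.IsSpanningTree T2 ∧
      Disjoint T1 T2 ∧ T1 ∪ T2 = Set.univ := by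
  obtain ⟨hV, hE, T1, T2, hc1, hc2, hdisj, huniv, hcard1, hcard2⟩ := Multigraph.built2_aux G hG
  exact ⟨T1, T2, Multigraph.isSpanningTree_of G T1 hc1 hcard1,
    Multigraph.isSpanningTree_of G T2 hc2 hcard2, hdisj, huniv⟩
end

section
/- Let G be a connected multigraph that is the edge-disjoint union of spanning trees T1 and T2. For any edge e1 ∈ T1: (a) if e1 is contracted, there exists an edge f in T2 whose deletion makes the resulting graph again an edge-disjoint union of two spanning trees; (b) if e1 is deleted, there exists an edge f in T2 whose contraction makes the resulting graph again an edge-disjoint union of two spanning trees. -/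
namespace Multigraph

variable {V E : Type*}

open Classical in
/-- Contract the vertex `b` onto the vertex `a` (identifying the two endpoints of a
contracted edge) and delete the edges in `S`.  Contracting an edge `x` with distinct
endpoints is `contractDelete G (G.fst x) (G.snd x) hx {x}`. -/
noncomputable def contractDelete (G : Multigraph V E) (a b : V) (hab : a ≠ b)
    (S : Set E) : Multigraph {x : V // x ≠ b} {e : E // e ∉ S} where
  fst := fun e => if h : G.fst e.1 = b then ⟨a, hab⟩ else ⟨G.fst e.1, h⟩
  snd := fun e => if h : G.snd e.1 = b then ⟨a, hab⟩ else ⟨G.snd e.1, h⟩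

end Multigraph


namespace Multigraph

variable {V E : Type*} (G : Multigraph V E)

/-- Connectivity relation generated by edges of `S`. -/
def connRel (S : Set E) : V → V → Prop := Relation.ReflTransGen (G.Adj S)

/-- Connectivity using edges of `S` plus one virtual edge joining `y1` and `y2`. -/
def connP (S : Set E) (y1 y2 : V) : V → V → Prop :=
  Relation.ReflTransGen (fun u v => G.Adj S u v ∨ (u = y1 ∧ v = y2) ∨ (u = y2 ∧ v = y1))

variable {G}

lemma adj_symm_s15 {S : Set E} {u v : V} (h : G.Adj S u v) : G.Adj S v u := by
  obtain ⟨e, he, h | h⟩ := h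
  · exact ⟨e, he, Or.inr ⟨h.1, h.2⟩⟩
  · exact ⟨e, he, Or.inl ⟨h.1, h.2⟩⟩

lemma adj_mono {S S' : Set E} (hs : S ⊆ S') {u v : V} (h : G.Adj S u v) : G.Adj S' u v := by
  obtain ⟨e, he, h⟩ := h; exact ⟨e, hs he, h⟩

lemma connRel_symm {S : Set E} {u v : V} (h : G.connRel S u v) : G.connRel S v u :=
  (@Relation.ReflTransGen.symmetric _ _ ⟨fun _ _ => adj_symm_s15⟩).symm _ _ h

lemma connRel_trans {S : Set E} {u v w : V} (h : G.connRel S u v) (h' : G.connRel S v w) :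
    G.connRel S u w := h.trans h'

lemma connRel_mono {S S' : Set E} (hs : S ⊆ S') {u v : V} (h : G.connRel S u v) :
    G.connRel S' u v := Relation.ReflTransGen.mono (fun _ _ => adj_mono hs) _ _ h

lemma connRel_connP {S : Set E} {y1 y2 u v : V} (h : G.connRel S u v) :
    G.connP S y1 y2 u v := Relation.ReflTransGen.mono (fun _ _ h => Or.inl h) _ _ h

lemma connP_symm {S : Set E} {y1 y2 u v : V} (h : G.connP S y1 y2 u v) :
    G.connP S y1 y2 v u := by
  refine (@Relation.ReflTransGen.symmetric _ _ ⟨fun x y hxy => ?_⟩).symm _ _ h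
  rcases hxy with h | ⟨h1, h2⟩ | ⟨h1, h2⟩
  · exact Or.inl (adj_symm_s15 h)
  · exact Or.inr (Or.inr ⟨h2, h1⟩)
  · exact Or.inr (Or.inl ⟨h2, h1⟩)

lemma connP_comm {S : Set E} {y1 y2 u v : V} :
    G.connP S y1 y2 u v ↔ G.connP S y2 y1 u v := by
  have key : ∀ {a b : V}, G.connP S a b u v → G.connP S b a u v := by
    intro a b h
    refine Relation.ReflTransGen.mono (fun x y hxy => ?_) _ _ h
    rcases hxy with h | ⟨h1, h2⟩ | ⟨h1, h2⟩
    · exact Or.inl h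
    · exact Or.inr (Or.inr ⟨h1, h2⟩)
    · exact Or.inr (Or.inl ⟨h1, h2⟩)
  exact ⟨key, key⟩

/-- Decomposition of `connP` into pure `connRel` pieces. -/
lemma connP_iff {S : Set E} {y1 y2 u v : V} :
    G.connP S y1 y2 u v ↔ G.connRel S u v ∨
      (G.connRel S u y1 ∧ G.connRel S y2 v) ∨ (G.connRel S u y2 ∧ G.connRel S y1 v) := by
  constructor
  · intro h
    induction h with
    | refl => exact Or.inl .refl
    | tail _ hstep ih =>
      rcases hstep with hadj | hpair
      · rcases ih with h1 | ⟨h1, h2⟩ | ⟨h1, h2⟩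
        · exact Or.inl (h1.tail hadj)
        · exact Or.inr (Or.inl ⟨h1, h2.tail hadj⟩)
        · exact Or.inr (Or.inr ⟨h1, h2.tail hadj⟩)
      · rcases hpair with ⟨hw, hv⟩ | ⟨hw, hv⟩ <;> subst hw <;> subst hv
        · rcases ih with h1 | ⟨h1, _⟩ | ⟨h1, _⟩
          · exact Or.inr (Or.inl ⟨h1, .refl⟩)
          · exact Or.inr (Or.inl ⟨h1, .refl⟩)
          · exact Or.inl h1
        · rcases ih with h1 | ⟨h1, _⟩ | ⟨h1, _⟩
          · exact Or.inr (Or.inr ⟨h1, .refl⟩)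
          · exact Or.inl h1
          · exact Or.inr (Or.inr ⟨h1, .refl⟩)
  · have pstep : G.connP S y1 y2 y1 y2 :=
      Relation.ReflTransGen.single (Or.inr (Or.inl ⟨rfl, rfl⟩))
    have pstep' : G.connP S y1 y2 y2 y1 :=
      Relation.ReflTransGen.single (Or.inr (Or.inr ⟨rfl, rfl⟩))
    rintro (h | ⟨h1, h2⟩ | ⟨h1, h2⟩)
    · exact connRel_connP h
    · exact (connRel_connP h1).trans (pstep.trans (connRel_connP h2))
    · exact (connRel_connP h1).trans (pstep'.trans (connRel_connP h2))

/-- Removing an edge from the edge set is the same as replacing it with a virtual edge. -/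
lemma connRel_eq_connP {S : Set E} {x : E} (hx : x ∈ S) {u v : V} :
    G.connRel S u v ↔ G.connP (S \ {x}) (G.fst x) (G.snd x) u v := by
  constructor <;> refine fun h => Relation.ReflTransGen.mono ?_ _ _ h
  · rintro z w ⟨e, he, h⟩
    by_cases hex : e = x
    · subst hex
      rcases h with ⟨h1, h2⟩ | ⟨h1, h2⟩
      · exact Or.inr (Or.inl ⟨h1.symm, h2.symm⟩)
      · exact Or.inr (Or.inr ⟨h2.symm, h1.symm⟩)
    · exact Or.inl ⟨e, ⟨he, hex⟩, h⟩
  · rintro z w (⟨e, he, h⟩ | ⟨h1, h2⟩ | ⟨h1, h2⟩)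
    · exact ⟨e, he.1, h⟩
    · exact ⟨x, hx, Or.inl ⟨h1.symm, h2.symm⟩⟩
    · exact ⟨x, hx, Or.inr ⟨h2.symm, h1.symm⟩⟩

lemma del_iff {S : Set E} {x : E} (hx : x ∈ S) {u v : V} :
    G.connRel S u v ↔ G.connRel (S \ {x}) u v ∨
      (G.connRel (S \ {x}) u (G.fst x) ∧ G.connRel (S \ {x}) (G.snd x) v) ∨
      (G.connRel (S \ {x}) u (G.snd x) ∧ G.connRel (S \ {x}) (G.fst x) v) :=
  (connRel_eq_connP hx).trans connP_iff

/-- In a spanning tree, the two endpoints of an edge are separated by its removal. -/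
lemma tree_sep {T : Set E} (hT : G.IsSpanningTree T) {x : E} (hx : x ∈ T) :
    ¬ G.connRel (T \ {x}) (G.fst x) (G.snd x) := by
  intro hc
  refine hT.2 x hx ?_
  intro u v
  rcases (del_iff hx).mp (hT.1 u v) with h | ⟨ha, hb⟩ | ⟨ha, hb⟩
  · exact h
  · exact (ha.trans hc).trans hb
  · exact (ha.trans (connRel_symm hc)).trans hb

lemma tree_two_class {T : Set E} (hT : G.IsSpanningTree T) {x : E} (hx : x ∈ T) (w : V) :
    G.connRel (T \ {x}) w (G.fst x) ∨ G.connRel (T \ {x}) w (G.snd x) := by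
  rcases (del_iff hx).mp (hT.1 w (G.fst x)) with h | ⟨ha, _⟩ | ⟨ha, _⟩
  · exact Or.inl h
  · exact Or.inl ha
  · exact Or.inr ha

section core

lemma beta_core {α : Type*} {D2 : α → α → Prop}
    (sy : ∀ {u v}, D2 u v → D2 v u) (tr : ∀ {u v w}, D2 u v → D2 v w → D2 u w)
    {p q y1 y2 p' q' : α}
    (Hp : D2 p y1 ∨ (D2 p p' ∧ D2 q' y1) ∨ (D2 p q' ∧ D2 p' y1))
    (Hq : D2 q y2 ∨ (D2 q p' ∧ D2 q' y2) ∨ (D2 q q' ∧ D2 p' y2))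
    (n1 : ¬ D2 p q) (n2 : ¬ (D2 p p' ∧ D2 q' q)) (n4 : ¬ D2 p' q')
    (n6 : ¬ (D2 p' q ∧ D2 p q'))
    (h1 : D2 p' y1) (h2 : D2 y2 q') : False := by
  rcases Hp with hp1 | ⟨hpa, hpb⟩ | ⟨hpa, hpb⟩
  · rcases Hq with hq1 | ⟨hqa, hqb⟩ | ⟨hqa, hqb⟩
    · exact n2 ⟨tr hp1 (sy h1), tr (sy h2) (sy hq1)⟩
    · exact n1 (tr hp1 (tr (sy h1) (sy hqa)))
    · exact n4 (tr hqb h2)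
  · exact n4 (tr h1 (sy hpb))
  · rcases Hq with hq1 | ⟨hqa, hqb⟩ | ⟨hqa, hqb⟩
    · exact n1 (tr hpa (tr (sy h2) (sy hq1)))
    · exact n6 ⟨sy hqa, hpa⟩
    · exact n4 (tr hqb h2)

end core

/-- Main lemma: if `T` is a spanning tree, `x ∈ T` has endpoints `p, q`, and
`y1, y2` are vertices with `p ~ y1`, `q ~ y2` in `T \ {x}`, then `T \ {x}`
together with the virtual edge `y1y2` is again a spanning tree. -/
lemma treeplus {T : Set E} (hT : G.IsSpanningTree T) {x : E} (hx : x ∈ T)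
    {y1 y2 : V} (hp : G.connRel (T \ {x}) (G.fst x) y1)
    (hq : G.connRel (T \ {x}) (G.snd x) y2) :
    (∀ u v, G.connP (T \ {x}) y1 y2 u v) ∧
    ∀ g ∈ T, g ≠ x → ¬ ∀ u v, G.connP (T \ ({x, g} : Set E)) y1 y2 u v := by
  constructor
  · intro u v
    refine connP_iff.mpr ?_
    rcases (del_iff hx).mp (hT.1 u v) with h | ⟨ha, hb⟩ | ⟨ha, hb⟩
    · exact Or.inl h
    · exact Or.inr (Or.inl ⟨ha.trans hp, (connRel_symm hq).trans hb⟩)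
    · exact Or.inr (Or.inr ⟨ha.trans hq, (connRel_symm hp).trans hb⟩)
  · intro g hg hgx hall
    have hgx' : g ∈ T \ {x} := ⟨hg, hgx⟩
    have hxg' : x ∈ T \ {g} := ⟨hx, fun h => hgx (by simpa using h.symm)⟩
    have hSg : (T \ {x}) \ {g} = T \ ({x, g} : Set E) := by
      rw [Set.diff_diff, Set.singleton_union]
    have hSx : (T \ {g}) \ {x} = T \ ({x, g} : Set E) := by
      rw [Set.diff_diff, Set.singleton_union, Set.pair_comm]
    set D2 := G.connRel (T \ ({x, g} : Set E)) with hD2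
    have sy : ∀ {u v}, D2 u v → D2 v u := fun h => connRel_symm h
    have tr : ∀ {u v w}, D2 u v → D2 v w → D2 u w := fun h h' => h.trans h'
    -- decompose C := connRel (T \ {x}) over g
    have Cdec : ∀ z w, G.connRel (T \ {x}) z w ↔ D2 z w ∨
        (D2 z (G.fst g) ∧ D2 (G.snd g) w) ∨ (D2 z (G.snd g) ∧ D2 (G.fst g) w) := by
      intro z w
      rw [hD2, ← hSg]
      exact del_iff hgx'
    have Ddec : ∀ z w, G.connRel (T \ {g}) z w ↔ D2 z w ∨
        (D2 z (G.fst x) ∧ D2 (G.snd x) w) ∨ (D2 z (G.snd x) ∧ D2 (G.fst x) w) := by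
      intro z w
      rw [hD2, ← hSx]
      exact del_iff hxg'
    have npq : ¬ G.connRel (T \ {x}) (G.fst x) (G.snd x) := tree_sep hT hx
    have npq' : ¬ G.connRel (T \ {g}) (G.fst g) (G.snd g) := tree_sep hT hg
    rw [Cdec] at npq
    rw [Ddec] at npq'
    have n1 : ¬ D2 (G.fst x) (G.snd x) := fun h => npq (Or.inl h)
    have n2 : ¬ (D2 (G.fst x) (G.fst g) ∧ D2 (G.snd g) (G.snd x)) :=
      fun h => npq (Or.inr (Or.inl h))
    have n4 : ¬ D2 (G.fst g) (G.snd g) := fun h => npq' (Or.inl h)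
    have n5 : ¬ (D2 (G.fst g) (G.fst x) ∧ D2 (G.snd x) (G.snd g)) :=
      fun h => npq' (Or.inr (Or.inl h))
    have n6 : ¬ (D2 (G.fst g) (G.snd x) ∧ D2 (G.fst x) (G.snd g)) :=
      fun h => npq' (Or.inr (Or.inr h))
    have Hp' := (Cdec _ _).mp hp
    have Hq' := (Cdec _ _).mp hq
    rcases connP_iff.mp (hall (G.fst g) (G.snd g)) with h | ⟨hh1, hh2⟩ | ⟨hh1, hh2⟩
    · exact n4 h
    · exact @beta_core V D2 sy tr
        (G.fst x) (G.snd x) y1 y2 (G.fst g) (G.snd g) Hp' Hq' n1 n2 n4 n6 hh1 hh2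
    · exact @beta_core V D2 sy tr
        (G.snd x) (G.fst x) y2 y1 (G.fst g) (G.snd g) Hq' Hp' (fun h => n1 (sy h))
        (fun h => n6 ⟨sy h.1, sy h.2⟩) n4 n5 hh1 hh2

variable (G)

open Classical in
/-- The projection onto the contracted vertex set. -/
noncomputable def proj (a b : V) (hab : a ≠ b) (v : V) : {x : V // x ≠ b} :=
  if h : v = b then ⟨a, hab⟩ else ⟨v, h⟩

variable {G}

lemma proj_val {a b : V} (hab : a ≠ b) (u' : {x : V // x ≠ b}) :
    proj a b hab u'.1 = u' := by
  simp [proj, u'.2]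

lemma proj_ab {a b : V} (hab : a ≠ b) : proj a b hab a = proj a b hab b := by
  simp [proj, hab]

lemma contract_fst {a b : V} {hab : a ≠ b} {D : Set E} (e : {e : E // e ∉ D}) :
    (G.contractDelete a b hab D).fst e = proj a b hab (G.fst e.1) := rfl

lemma contract_snd {a b : V} {hab : a ≠ b} {D : Set E} (e : {e : E // e ∉ D}) :
    (G.contractDelete a b hab D).snd e = proj a b hab (G.snd e.1) := rfl

/-- Transfer of connectivity between the contracted graph and `connP` in `G`. -/
lemma conn_contract_iff {a b : V} (hab : a ≠ b) (D : Set E) (S' : Set {e : E // e ∉ D}) :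
    (G.contractDelete a b hab D).Conn S' ↔
      ∀ u v : V, G.connP {e : E | ∃ h : e ∉ D, (⟨e, h⟩ : {e : E // e ∉ D}) ∈ S'} a b u v := by
  set H := G.contractDelete a b hab D with hH
  set S : Set E := {e : E | ∃ h : e ∉ D, (⟨e, h⟩ : {e : E // e ∉ D}) ∈ S'} with hS
  have near : ∀ {x : V} {w' : {x : V // x ≠ b}}, proj a b hab x = w' →
      G.connP S a b w'.1 x := by
    intro x w' hx
    by_cases hxb : x = b
    · subst hxb
      have : w' = ⟨a, hab⟩ := by rw [← hx]; simp [proj]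
      subst this
      exact Relation.ReflTransGen.single (Or.inr (Or.inl ⟨rfl, rfl⟩))
    · have : w'.1 = x := by rw [← hx]; simp [proj, hxb]
      rw [this]
      exact Relation.ReflTransGen.refl
  have up : ∀ {u' v' : {x : V // x ≠ b}}, H.Adj S' u' v' → G.connP S a b u'.1 v'.1 := by
    intro u' v' hadj
    obtain ⟨e', he', hor⟩ := hadj
    have heS : e'.1 ∈ S := ⟨e'.2, by simpa using he'⟩
    have adjstep : G.Adj S (G.fst e'.1) (G.snd e'.1) := ⟨e'.1, heS, Or.inl ⟨rfl, rfl⟩⟩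
    rcases hor with ⟨hf, hs⟩ | ⟨hf, hs⟩
    · rw [contract_fst] at hf; rw [contract_snd] at hs
      exact ((near hf).trans (Relation.ReflTransGen.single (Or.inl adjstep))).trans
        (connP_symm (near hs))
    · rw [contract_fst] at hf; rw [contract_snd] at hs
      exact ((near hs).trans (Relation.ReflTransGen.single (Or.inl (adj_symm_s15 adjstep)))).trans
        (connP_symm (near hf))
  constructor
  · intro h u v
    have key : ∀ {u' v' : {x : V // x ≠ b}}, Relation.ReflTransGen (H.Adj S') u' v' →
        G.connP S a b u'.1 v'.1 := by
      intro u' v' h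
      induction h with
      | refl => exact .refl
      | tail _ hstep ih => exact ih.trans (up hstep)
    have h1 : G.connP S a b u (proj a b hab u).1 := connP_symm (near rfl)
    have h2 : G.connP S a b (proj a b hab v).1 v := near rfl
    exact (h1.trans (key (h (proj a b hab u) (proj a b hab v)))).trans h2
  · intro h u' v'
    have down : ∀ {x y : V}, G.connP S a b x y →
        Relation.ReflTransGen (H.Adj S') (proj a b hab x) (proj a b hab y) := by
      intro x y hxy
      induction hxy with
      | refl => exact .refl
      | tail _ hstep ih =>
        refine ih.trans ?_
        rcases hstep with ⟨e, he, hor⟩ | ⟨h1, h2⟩ | ⟨h1, h2⟩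
        · obtain ⟨heD, heS'⟩ := he
          refine Relation.ReflTransGen.single ⟨⟨e, heD⟩, heS', ?_⟩
          rcases hor with ⟨h1, h2⟩ | ⟨h1, h2⟩
          · exact Or.inl ⟨by rw [contract_fst, h1], by rw [contract_snd, h2]⟩
          · exact Or.inr ⟨by rw [contract_fst, h1], by rw [contract_snd, h2]⟩
        · subst h1; subst h2; rw [proj_ab hab]
        · subst h1; subst h2; rw [← proj_ab hab]
    have := down (h u'.1 v'.1)
    rwa [proj_val hab, proj_val hab] at this

lemma connRel_empty {u v : V} (h : G.connRel (∅ : Set E) u v) : u = v := by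
  induction h with
  | refl => rfl
  | tail _ hstep ih => obtain ⟨e, he, _⟩ := hstep; exact absurd he (Set.notMem_empty e)

/-- Existence of a suitable edge of `T2` for case (a): an edge on the tree path
between `a` and `b`, correctly oriented. -/
lemma exists_f_a [Fintype E] {T2 : Set E} (h2 : G.IsSpanningTree T2) {a b : V} (hab : a ≠ b) :
    ∃ f ∈ T2, (G.connRel (T2 \ {f}) a (G.fst f) ∧ G.connRel (T2 \ {f}) b (G.snd f)) ∨
      (G.connRel (T2 \ {f}) a (G.snd f) ∧ G.connRel (T2 \ {f}) b (G.fst f)) := by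
  classical
  set s : Finset (Finset E) :=
    Finset.univ.filter (fun P => ↑P ⊆ T2 ∧ G.connRel (↑P : Set E) a b) with hs
  have hsne : s.Nonempty := by
    refine ⟨(Set.toFinite T2).toFinset, ?_⟩
    rw [hs, Finset.mem_filter]
    refine ⟨Finset.mem_univ _, ?_, ?_⟩
    · rw [Set.Finite.coe_toFinset]
    · rw [Set.Finite.coe_toFinset]; exact h2.1 a b
  obtain ⟨P, hPs, hPmin⟩ := Finset.exists_min_image s Finset.card hsne
  rw [hs, Finset.mem_filter] at hPs
  obtain ⟨-, hPT2, hPconn⟩ := hPs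
  have hPne : P.Nonempty := by
    rcases P.eq_empty_or_nonempty with h | h
    · subst h
      rw [Finset.coe_empty] at hPconn
      exact absurd (connRel_empty hPconn) hab
    · exact h
  obtain ⟨f, hfP⟩ := hPne
  have hmin : ¬ G.connRel (↑(P.erase f) : Set E) a b := by
    intro hc
    have hmem : P.erase f ∈ s := by
      rw [hs, Finset.mem_filter]
      exact ⟨Finset.mem_univ _,
        (Finset.coe_subset.mpr (Finset.erase_subset f P)).trans hPT2, hc⟩
    have := hPmin _ hmem
    exact absurd (Finset.card_erase_lt_of_mem hfP) (not_lt.mpr this)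
  have hfP' : f ∈ (↑P : Set E) := hfP
  have hcoe : (↑P : Set E) \ {f} = ↑(P.erase f) := by
    rw [Finset.coe_erase]
  rcases (del_iff hfP').mp hPconn with h | ⟨ha', hb'⟩ | ⟨ha', hb'⟩
  · rw [hcoe] at h; exact absurd h hmin
  · have hsub : (↑P : Set E) \ {f} ⊆ T2 \ {f} :=
      Set.diff_subset_diff_left hPT2
    exact ⟨f, hPT2 hfP, Or.inl ⟨connRel_mono hsub ha', connRel_symm (connRel_mono hsub hb')⟩⟩
  · have hsub : (↑P : Set E) \ {f} ⊆ T2 \ {f} :=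
      Set.diff_subset_diff_left hPT2
    exact ⟨f, hPT2 hfP, Or.inr ⟨connRel_mono hsub ha', connRel_symm (connRel_mono hsub hb')⟩⟩

/-- Existence of a suitable edge of `T2` for case (b): an edge of `T2` crossing the
cut of `T1 \ {e1}`. -/
lemma exists_f_b {T1 T2 : Set E} (h1 : G.IsSpanningTree T1) (h2 : G.IsSpanningTree T2)
    {e1 : E} (he1 : e1 ∈ T1) :
    ∃ f ∈ T2, G.fst f ≠ G.snd f ∧
      ((G.connRel (T1 \ {e1}) (G.fst e1) (G.fst f) ∧
        G.connRel (T1 \ {e1}) (G.snd e1) (G.snd f)) ∨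
       (G.connRel (T1 \ {e1}) (G.fst e1) (G.snd f) ∧
        G.connRel (T1 \ {e1}) (G.snd e1) (G.fst f))) := by
  classical
  set C1 := G.connRel (T1 \ {e1}) with hC1
  have na : ¬ C1 (G.fst e1) (G.snd e1) := tree_sep h1 he1
  have twoclass : ∀ w, C1 w (G.fst e1) ∨ C1 w (G.snd e1) := tree_two_class h1 he1
  have key : ∀ u v : V, G.connRel T2 u v → C1 (G.fst e1) u →
      C1 (G.fst e1) v ∨ ∃ f ∈ T2,
        (C1 (G.fst e1) (G.fst f) ∧ ¬ C1 (G.fst e1) (G.snd f)) ∨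
        (C1 (G.fst e1) (G.snd f) ∧ ¬ C1 (G.fst e1) (G.fst f)) := by
    intro u v h hu
    induction h with
    | refl => exact Or.inl hu
    | @tail w v' _ hstep ih =>
      rcases ih with hw | hf
      · obtain ⟨f, hfT2, hor⟩ := hstep
        by_cases hv : C1 (G.fst e1) v'
        · exact Or.inl hv
        · refine Or.inr ⟨f, hfT2, ?_⟩
          rcases hor with ⟨hh1, hh2⟩ | ⟨hh1, hh2⟩
          · rw [← hh1] at hw; rw [← hh2] at hv; exact Or.inl ⟨hw, hv⟩
          · rw [← hh2] at hw; rw [← hh1] at hv; exact Or.inr ⟨hw, hv⟩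
      · exact Or.inr hf
  rcases key (G.fst e1) (G.snd e1) (h2.1 _ _) Relation.ReflTransGen.refl with h | ⟨f, hfT2, hor⟩
  · exact absurd h na
  · rcases hor with ⟨hp, hq⟩ | ⟨hp, hq⟩
    · have hb : C1 (G.snd e1) (G.snd f) := by
        rcases twoclass (G.snd f) with h | h
        · exact absurd (connRel_symm h) hq
        · exact connRel_symm h
      refine ⟨f, hfT2, fun he => hq (by rw [← he]; exact hp), Or.inl ⟨hp, hb⟩⟩
    · have hb : C1 (G.snd e1) (G.fst f) := by
        rcases twoclass (G.fst f) with h | h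
        · exact absurd (connRel_symm h) hq
        · exact connRel_symm h
      refine ⟨f, hfT2, fun he => hq (by rw [he]; exact hp), Or.inr ⟨hp, hb⟩⟩

/-- Assembly: given the four connectivity facts phrased via `connP`, produce the
two spanning trees of the contracted-deleted graph. -/
lemma assemble {T1 T2 : Set E} (h1 : G.IsSpanningTree T1) (h2 : G.IsSpanningTree T2)
    (hdisj : Disjoint T1 T2) (hunion : T1 ∪ T2 = Set.univ)
    {e1 f : E} (he1 : e1 ∈ T1) (hf : f ∈ T2) {a b : V} (hab : a ≠ b)
    (hA : ∀ u v, G.connP (T1 \ {e1}) a b u v)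
    (hB : ∀ g ∈ T1, g ≠ e1 → ¬ ∀ u v, G.connP (T1 \ ({e1, g} : Set E)) a b u v)
    (hC : ∀ u v, G.connP (T2 \ {f}) a b u v)
    (hD : ∀ g ∈ T2, g ≠ f → ¬ ∀ u v, G.connP (T2 \ ({f, g} : Set E)) a b u v) :
    ∃ S1 S2 : Set {e : E // e ∉ ({e1, f} : Set E)},
      (G.contractDelete a b hab {e1, f}).IsSpanningTree S1 ∧
      (G.contractDelete a b hab {e1, f}).IsSpanningTree S2 ∧
      Disjoint S1 S2 ∧ S1 ∪ S2 = Set.univ := by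
  have hfT1 : f ∉ T1 := fun h => Set.disjoint_left.mp hdisj h hf
  have he1T2 : e1 ∉ T2 := fun h => Set.disjoint_left.mp hdisj he1 h
  refine ⟨{e | e.1 ∈ T1}, {e | e.1 ∈ T2}, ⟨?_, ?_⟩, ⟨?_, ?_⟩, ?_, ?_⟩
  · rw [conn_contract_iff]
    have hset : {e : E | ∃ h : e ∉ ({e1, f} : Set E),
        (⟨e, h⟩ : {e : E // e ∉ ({e1, f} : Set E)}) ∈
          ({e : {e : E // e ∉ ({e1, f} : Set E)} | e.1 ∈ T1})} = T1 \ {e1} := by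
      ext e
      simp only [Set.mem_setOf_eq, Set.mem_diff, Set.mem_singleton_iff,
        Set.mem_insert_iff, exists_prop]
      constructor
      · rintro ⟨hne, hT⟩
        exact ⟨hT, fun h => hne (Or.inl h)⟩
      · rintro ⟨hT, hne⟩
        refine ⟨?_, hT⟩
        rintro (h | h)
        · exact hne h
        · exact hfT1 (h ▸ hT)
    rw [hset]
    exact hA
  · rintro e' he' hconn
    have hne1 : e'.1 ≠ e1 := fun h => e'.2 (by rw [h]; exact Set.mem_insert _ _)
    refine hB e'.1 he' hne1 ?_
    have hconn' := (conn_contract_iff hab _ _).mp hconn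
    have hset : {e : E | ∃ h : e ∉ ({e1, f} : Set E),
        (⟨e, h⟩ : {e : E // e ∉ ({e1, f} : Set E)}) ∈
          (({e : {e : E // e ∉ ({e1, f} : Set E)} | e.1 ∈ T1}) \ {e'})} =
        T1 \ ({e1, e'.1} : Set E) := by
      ext e
      simp only [Set.mem_setOf_eq, Set.mem_diff, Set.mem_singleton_iff,
        Set.mem_insert_iff, exists_prop]
      constructor
      · rintro ⟨hne, hT, hnee'⟩
        refine ⟨hT, ?_⟩
        rintro (h | h)
        · exact hne (Or.inl h)
        · exact hnee' (Subtype.ext h)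
      · rintro ⟨hT, hne⟩
        have hef : e ≠ f := fun h => hfT1 (h ▸ hT)
        have hee1 : e ≠ e1 := fun h => hne (Or.inl h)
        refine ⟨?_, hT, ?_⟩
        · rintro (h | h)
          · exact hee1 h
          · exact hef h
        · intro h
          exact hne (Or.inr (congrArg Subtype.val h))
    rw [hset] at hconn'
    exact hconn'
  · rw [conn_contract_iff]
    have hset : {e : E | ∃ h : e ∉ ({e1, f} : Set E),
        (⟨e, h⟩ : {e : E // e ∉ ({e1, f} : Set E)}) ∈
          ({e : {e : E // e ∉ ({e1, f} : Set E)} | e.1 ∈ T2})} = T2 \ {f} := by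
      ext e
      simp only [Set.mem_setOf_eq, Set.mem_diff, Set.mem_singleton_iff,
        Set.mem_insert_iff, exists_prop]
      constructor
      · rintro ⟨hne, hT⟩
        exact ⟨hT, fun h => hne (Or.inr h)⟩
      · rintro ⟨hT, hne⟩
        refine ⟨?_, hT⟩
        rintro (h | h)
        · exact he1T2 (h ▸ hT)
        · exact hne h
    rw [hset]
    exact hC
  · rintro e' he' hconn
    have hnef : e'.1 ≠ f := fun h => e'.2 (by rw [h]; exact Set.mem_insert_of_mem _ rfl)
    refine hD e'.1 he' hnef ?_
    have hconn' := (conn_contract_iff hab _ _).mp hconn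
    have hset : {e : E | ∃ h : e ∉ ({e1, f} : Set E),
        (⟨e, h⟩ : {e : E // e ∉ ({e1, f} : Set E)}) ∈
          (({e : {e : E // e ∉ ({e1, f} : Set E)} | e.1 ∈ T2}) \ {e'})} =
        T2 \ ({f, e'.1} : Set E) := by
      ext e
      simp only [Set.mem_setOf_eq, Set.mem_diff, Set.mem_singleton_iff,
        Set.mem_insert_iff, exists_prop]
      constructor
      · rintro ⟨hne, hT, hnee'⟩
        refine ⟨hT, ?_⟩
        rintro (h | h)
        · exact hne (Or.inr h)
        · exact hnee' (Subtype.ext h)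
      · rintro ⟨hT, hne⟩
        have hee1 : e ≠ e1 := fun h => he1T2 (h ▸ hT)
        have hef : e ≠ f := fun h => hne (Or.inl h)
        refine ⟨?_, hT, ?_⟩
        · rintro (h | h)
          · exact hee1 h
          · exact hef h
        · intro h
          exact hne (Or.inr (congrArg Subtype.val h))
    rw [hset] at hconn'
    exact hconn'
  · refine Set.disjoint_left.mpr ?_
    intro e' he1' he2'
    exact Set.disjoint_left.mp hdisj he1' he2'
  · ext e
    simp only [Set.mem_union, Set.mem_setOf_eq, Set.mem_univ, iff_true]
    have he : e.1 ∈ T1 ∪ T2 := by rw [hunion]; trivial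
    exact he

end Multigraph

/-- Let `G` be a connected multigraph that is the edge-disjoint union of spanning trees
`T1` and `T2`, and let `e1 ∈ T1`.  (a) Contracting `e1`, there is an edge `f ∈ T2`
whose deletion makes the resulting graph `(G/e1) - f` again an edge-disjoint union of
two spanning trees.  (b) Deleting `e1`, there is an edge `f ∈ T2` whose contraction
makes the resulting graph `(G - e1)/f` again an edge-disjoint union of two spanning
trees. -/
theorem contract_or_delete_keeps_two_trees {V E : Type*} [Fintype V] [Fintype E]
    (G : Multigraph V E) (hconn : G.Conn Set.univ)
    (T1 T2 : Set E)
    (h1 : G.IsSpanningTree T1) (h2 : G.IsSpanningTree T2)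
    (hdisj : Disjoint T1 T2) (hunion : T1 ∪ T2 = Set.univ)
    (e1 : E) (he1 : e1 ∈ T1) :
    (∃ (hne : G.fst e1 ≠ G.snd e1) (f : E), f ∈ T2 ∧
      ∃ S1 S2 : Set {e : E // e ∉ ({e1, f} : Set E)},
        (G.contractDelete (G.fst e1) (G.snd e1) hne {e1, f}).IsSpanningTree S1 ∧
        (G.contractDelete (G.fst e1) (G.snd e1) hne {e1, f}).IsSpanningTree S2 ∧
        Disjoint S1 S2 ∧ S1 ∪ S2 = Set.univ) ∧
    (∃ f : E, f ∈ T2 ∧ ∃ hne : G.fst f ≠ G.snd f,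
      ∃ S1 S2 : Set {e : E // e ∉ ({e1, f} : Set E)},
        (G.contractDelete (G.fst f) (G.snd f) hne {e1, f}).IsSpanningTree S1 ∧
        (G.contractDelete (G.fst f) (G.snd f) hne {e1, f}).IsSpanningTree S2 ∧
        Disjoint S1 S2 ∧ S1 ∪ S2 = Set.univ) := by
  classical
  constructor
  · -- case (a): contract e1, delete an edge of T2
    have hne : G.fst e1 ≠ G.snd e1 := by
      intro h
      exact Multigraph.tree_sep h1 he1 (by rw [h]; exact Relation.ReflTransGen.refl)
    obtain ⟨f, hfT2, hor⟩ := Multigraph.exists_f_a h2 hne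
    refine ⟨hne, f, hfT2, ?_⟩
    have t1 := Multigraph.treeplus (y1 := G.fst e1) (y2 := G.snd e1) h1 he1
      Relation.ReflTransGen.refl Relation.ReflTransGen.refl
    have t2 : (∀ u v, G.connP (T2 \ {f}) (G.fst e1) (G.snd e1) u v) ∧
        ∀ g ∈ T2, g ≠ f →
          ¬ ∀ u v, G.connP (T2 \ ({f, g} : Set E)) (G.fst e1) (G.snd e1) u v := by
      rcases hor with ⟨hp, hq⟩ | ⟨hp, hq⟩
      · exact Multigraph.treeplus h2 hfT2 (Multigraph.connRel_symm hp)
          (Multigraph.connRel_symm hq)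
      · have t := Multigraph.treeplus (y1 := G.snd e1) (y2 := G.fst e1) h2 hfT2
          (Multigraph.connRel_symm hq) (Multigraph.connRel_symm hp)
        exact ⟨fun u v => Multigraph.connP_comm.mp (t.1 u v),
          fun g hg hgf hall => t.2 g hg hgf fun u v => Multigraph.connP_comm.mp (hall u v)⟩
    exact Multigraph.assemble h1 h2 hdisj hunion he1 hfT2 hne t1.1 t1.2 t2.1 t2.2
  · -- case (b): delete e1, contract an edge of T2
    obtain ⟨f, hfT2, hnef, hor⟩ := Multigraph.exists_f_b h1 h2 he1
    refine ⟨f, hfT2, hnef, ?_⟩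
    have t2 := Multigraph.treeplus (y1 := G.fst f) (y2 := G.snd f) h2 hfT2
      Relation.ReflTransGen.refl Relation.ReflTransGen.refl
    have t1 : (∀ u v, G.connP (T1 \ {e1}) (G.fst f) (G.snd f) u v) ∧
        ∀ g ∈ T1, g ≠ e1 →
          ¬ ∀ u v, G.connP (T1 \ ({e1, g} : Set E)) (G.fst f) (G.snd f) u v := by
      rcases hor with ⟨hp, hq⟩ | ⟨hp, hq⟩
      · exact Multigraph.treeplus h1 he1 hp hq
      · have t := Multigraph.treeplus (y1 := G.snd f) (y2 := G.fst f) h1 he1 hp hq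
        exact ⟨fun u v => Multigraph.connP_comm.mp (t.1 u v),
          fun g hg hgf hall => t.2 g hg hgf fun u v => Multigraph.connP_comm.mp (hall u v)⟩
    exact Multigraph.assemble h1 h2 hdisj hunion he1 hfT2 hnef t1.1 t1.2 t2.1 t2.2
end
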